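/- arXiv:1007.0681 — 3 statements merged into one kernel-verified Lean document; each statement's English description precedes it below -/
import Mathlib

section
/- For every 1 ≤ p < ∞ there is a constant C = C(p) > 0 with the following property. Let V : ℝ² → ℝ² be a Borel measurable vector field vanishing outside the open unit ball B² and with ∫_{ℝ²} ‖V‖^p dx < ∞, and let 0 < r ≤ 1. Then there exist N ∈ ℕ and points y₁,…,y_N ∈ ℝ² such that: (i) the balls B_r(y₁),…,B_r(y_N) cover B²; (ii) the balls B_{r/2}(y₁),…,B_{r/2}(y_N) are pairwise disjoint; (iii) ∑_{i=1}^N ∫_{∂B_r(y_i)} |⟨V(y), (y−y_i)/r⟩|^p dH¹(y) ≤ C r^{−1} ∫_{ℝ²} ‖V‖^p dx. -/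
open MeasureTheory Metric Real ENNReal NNReal RealInnerProductSpace

noncomputable section

namespace GoodCoveringAux

local notation "E2" => EuclideanSpace ℝ (Fin 2)

def circ (θ : ℝ) : E2 := (WithLp.equiv 2 (Fin 2 → ℝ)).symm ![Real.cos θ, Real.sin θ]

lemma circ_apply_zero (θ : ℝ) : circ θ 0 = Real.cos θ := rfl
lemma circ_apply_one (θ : ℝ) : circ θ 1 = Real.sin θ := rfl

lemma lipschitzWith_sin : LipschitzWith 1 Real.sin :=
  lipschitzWith_of_nnnorm_deriv_le (fun x => Real.differentiableAt_sin) (by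
    intro x; rw [Real.deriv_sin]; simp [← NNReal.coe_le_coe, Real.abs_cos_le_one])

lemma lipschitzWith_cos : LipschitzWith 1 Real.cos :=
  lipschitzWith_of_nnnorm_deriv_le (fun x => Real.differentiableAt_cos) (by
    intro x; rw [Real.deriv_cos]; simp [← NNReal.coe_le_coe, abs_nonneg, Real.abs_sin_le_one])

lemma circ_lip : LipschitzWith 2 circ := by
  apply LipschitzWith.of_dist_le_mul
  intro a b
  rw [EuclideanSpace.dist_eq, Fin.sum_univ_two]
  have h0 : dist (circ a 0) (circ b 0) ≤ dist a b := by
    simpa [circ_apply_zero] using lipschitzWith_cos.dist_le_mul a b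
  have h1 : dist (circ a 1) (circ b 1) ≤ dist a b := by
    simpa [circ_apply_one] using lipschitzWith_sin.dist_le_mul a b
  have hd : (0:ℝ) ≤ dist a b := dist_nonneg
  have h2 : dist (circ a 0) (circ b 0) ^ 2 + dist (circ a 1) (circ b 1) ^ 2 ≤ (2 * dist a b)^2 := by
    nlinarith [(dist_nonneg : (0:ℝ) ≤ dist (circ a 0) (circ b 0)),
      (dist_nonneg : (0:ℝ) ≤ dist (circ a 1) (circ b 1))]
  refine le_trans (Real.sqrt_le_sqrt h2) ?_
  rw [Real.sqrt_sq (by positivity : (0:ℝ) ≤ 2 * dist a b)]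
  norm_num

lemma norm_circ (θ : ℝ) : ‖circ θ‖ = 1 := by
  rw [EuclideanSpace.norm_eq, Fin.sum_univ_two, circ_apply_zero, circ_apply_one]
  rw [Real.norm_eq_abs, Real.norm_eq_abs, sq_abs, sq_abs, Real.cos_sq_add_sin_sq, Real.sqrt_one]

lemma coord_abs_le_norm (v : E2) (i : Fin 2) : |v i| ≤ ‖v‖ := by
  rw [EuclideanSpace.norm_eq]
  have : |v i| = √(‖v i‖^2) := by
    rw [Real.sqrt_sq_eq_abs, Real.norm_eq_abs, abs_abs]
  rw [this]
  apply Real.sqrt_le_sqrt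
  exact Finset.single_le_sum (f := fun j => ‖v j‖^2) (fun j _ => by positivity) (Finset.mem_univ i)

lemma sphere_subset_image (c : E2) {r : ℝ} (hr : 0 < r) :
    sphere c r ⊆ (fun θ => c + r • circ θ) '' Set.Ioc (-π) π := by
  intro x hx
  set v : E2 := x - c with hv
  have hvnorm : ‖v‖ = r := by
    rw [hv, ← dist_eq_norm]; exact mem_sphere.mp hx
  set z : ℂ := ⟨v 0, v 1⟩ with hz
  have habs : ‖z‖ = r := by
    rw [Complex.norm_def, Complex.normSq_mk, ← hvnorm, EuclideanSpace.norm_eq, Fin.sum_univ_two]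
    rw [Real.norm_eq_abs, Real.norm_eq_abs, sq_abs, sq_abs]
    ring_nf
  have hz0 : z ≠ 0 := by
    intro h; rw [h] at habs; simp at habs; linarith
  refine ⟨Complex.arg z, Complex.arg_mem_Ioc z, ?_⟩
  have hcos : Real.cos z.arg = v 0 / r := by rw [Complex.cos_arg hz0, habs]
  have hsin : Real.sin z.arg = v 1 / r := by rw [Complex.sin_arg, habs]
  ext i
  fin_cases i
  · show c 0 + r * circ z.arg 0 = x 0
    rw [circ_apply_zero, hcos]
    have : v 0 = x 0 - c 0 := rfl
    field_simp
    linarith [this]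
  · show c 1 + r * circ z.arg 1 = x 1
    rw [circ_apply_one, hsin]
    have : v 1 = x 1 - c 1 := rfl
    field_simp
    linarith [this]


lemma lintegral_sphere_le {g : E2 → ℝ≥0∞} (hg : Measurable g) (c : E2) {r : ℝ} (hr : 0 < r) :
    ∫⁻ x in sphere c r, g x ∂μH[1] ≤
      ENNReal.ofReal (2*r) * ∫⁻ θ in Set.Ioc (-π) π, g (c + r • circ θ) := by
  set f : ℝ → E2 := fun θ => c + r • circ θ with hf
  have hflip : LipschitzWith (2*r).toNNReal f := by
    apply LipschitzWith.of_dist_le_mul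
    intro a b
    have : dist (f a) (f b) = r * dist (circ a) (circ b) := by
      simp only [hf, dist_eq_norm, add_sub_add_left_eq_sub, ← smul_sub, norm_smul,
        Real.norm_eq_abs, abs_of_pos hr]
    rw [this, Real.coe_toNNReal _ (by positivity)]
    have := circ_lip.dist_le_mul a b
    push_cast at this
    nlinarith [hr.le]
  have hfmeas : Measurable f := hflip.continuous.measurable
  have hle : (μH[1] : Measure E2).restrict (sphere c r) ≤
      Measure.map f (ENNReal.ofReal (2*r) • (volume : Measure ℝ).restrict (Set.Ioc (-π) π)) := by
    rw [Measure.le_iff]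
    intro A hA
    rw [Measure.restrict_apply hA, Measure.map_apply hfmeas hA]
    have hsub : A ∩ sphere c r ⊆ f '' (f ⁻¹' A ∩ Set.Ioc (-π) π) := by
      rintro x ⟨hxA, hxs⟩
      obtain ⟨θ, hθ, hfθ⟩ := sphere_subset_image c hr hxs
      refine ⟨θ, ⟨?_, hθ⟩, hfθ⟩
      have : f θ = x := hfθ
      simp only [Set.mem_preimage, this]
      exact hxA
    calc μH[1] (A ∩ sphere c r) ≤ μH[1] (f '' (f ⁻¹' A ∩ Set.Ioc (-π) π)) :=
          measure_mono hsub
      _ ≤ ((2*r).toNNReal : ℝ≥0∞) ^ (1:ℝ) * μH[1] (f ⁻¹' A ∩ Set.Ioc (-π) π) :=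
          hflip.hausdorffMeasure_image_le zero_le_one _
      _ = ENNReal.ofReal (2*r) * volume (f ⁻¹' A ∩ Set.Ioc (-π) π) := by
          rw [ENNReal.rpow_one, MeasureTheory.hausdorffMeasure_real]
          rfl
      _ = (ENNReal.ofReal (2*r) • (volume : Measure ℝ).restrict (Set.Ioc (-π) π)) (f ⁻¹' A) := by
          rw [Measure.smul_apply, Measure.restrict_apply (hfmeas hA), smul_eq_mul]
  calc ∫⁻ x in sphere c r, g x ∂μH[1]
      ≤ ∫⁻ x, g x ∂(Measure.map f (ENNReal.ofReal (2*r) • (volume : Measure ℝ).restrict (Set.Ioc (-π) π))) :=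
        lintegral_mono' hle le_rfl
    _ = ∫⁻ θ, g (f θ) ∂(ENNReal.ofReal (2*r) • (volume : Measure ℝ).restrict (Set.Ioc (-π) π)) :=
        lintegral_map hg hfmeas
    _ = ENNReal.ofReal (2*r) * ∫⁻ θ in Set.Ioc (-π) π, g (c + r • circ θ) := by
        rw [lintegral_smul_measure, smul_eq_mul]

lemma lintegral_G {g : E2 → ℝ≥0∞} (hg : Measurable g) (r : ℝ) :
    ∫⁻ c, (∫⁻ θ in Set.Ioc (-π) π, g (c + r • circ θ)) ∂(volume : Measure E2)
      = (∫⁻ x, g x ∂(volume : Measure E2)) * ENNReal.ofReal (2*π) := by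
  have hmap : Measurable fun q : E2 × ℝ => q.1 + r • circ q.2 :=
    measurable_fst.add ((circ_lip.continuous.const_smul r).measurable.comp measurable_snd)
  rw [lintegral_lintegral_swap (f := fun c θ => g (c + r • circ θ))
    (by exact (hg.comp hmap).aemeasurable)]
  have hinner : ∀ θ : ℝ, ∫⁻ c, g (c + r • circ θ) ∂(volume : Measure E2) = ∫⁻ x, g x ∂(volume : Measure E2) :=
    fun θ => lintegral_add_right_eq_self g (r • circ θ)
  simp_rw [hinner]
  rw [setLIntegral_const, Real.volume_Ioc]
  congr 1
  ring_nf

set_option maxHeartbeats 2000000 in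
lemma main_theorem (p : ℝ) (hp : 1 ≤ p) :
    ∃ C : ℝ, 0 < C ∧
      ∀ (V : EuclideanSpace ℝ (Fin 2) → EuclideanSpace ℝ (Fin 2)),
        Measurable V →
        (∀ x, x ∉ ball (0 : EuclideanSpace ℝ (Fin 2)) 1 → V x = 0) →
        (∫⁻ x, ENNReal.ofReal (‖V x‖ ^ p) ∂volume) < ⊤ →
        ∀ r : ℝ, 0 < r → r ≤ 1 →
        ∃ (N : ℕ) (y : Fin N → EuclideanSpace ℝ (Fin 2)),
          (ball (0 : EuclideanSpace ℝ (Fin 2)) 1 ⊆ ⋃ i, ball (y i) r) ∧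
          (∀ i j : Fin N, i ≠ j → Disjoint (ball (y i) (r / 2)) (ball (y j) (r / 2))) ∧
          (∑ i : Fin N, ∫⁻ x in sphere (y i) r,
              ENNReal.ofReal (|⟪V x, r⁻¹ • (x - y i)⟫| ^ p) ∂μH[1])
            ≤ ENNReal.ofReal (C * r⁻¹) * ∫⁻ x, ENNReal.ofReal (‖V x‖ ^ p) ∂volume := by
  classical
  refine ⟨8 * π, by positivity, ?_⟩
  intro V hV hV0 hVp r hr hr1
  have hp0 : (0:ℝ) ≤ p := le_trans zero_le_one hp
  -- the energy density
  set g : E2 → ℝ≥0∞ := fun x => ENNReal.ofReal (‖V x‖ ^ p) with hgdef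
  have hg : Measurable g := ENNReal.continuous_ofReal.measurable.comp
    (((Real.continuous_rpow_const hp0).measurable).comp hV.norm)
  set Etot : ℝ≥0∞ := ∫⁻ x, g x ∂(volume : Measure E2) with hEdef
  have hEtop : Etot ≠ ⊤ := hVp.ne
  -- the averaged boundary energy
  set G : E2 → ℝ≥0∞ := fun c => ∫⁻ θ in Set.Ioc (-π) π, g (c + r • circ θ) with hGdef
  have hmap : Measurable fun q : E2 × ℝ => q.1 + r • circ q.2 :=
    measurable_fst.add ((circ_lip.continuous.const_smul r).measurable.comp measurable_snd)
  have hG : Measurable G := Measurable.lintegral_prod_right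
    (f := fun c θ => g (c + r • circ θ)) (by exact hg.comp hmap)
  -- basic coordinate computations
  have hadd : ∀ (a b : E2) (i : Fin 2), (a + b) i = a i + b i := fun _ _ _ => rfl
  have hnegadd : ∀ (a b : E2) (i : Fin 2), (-a + b) i = -(a i) + b i := fun _ _ _ => rfl
  have hsub : ∀ (a b : E2) (i : Fin 2), (a - b) i = a i - b i := fun _ _ _ => rfl
  -- the box
  set Q : Set E2 := (MeasurableEquiv.toLp 2 (Fin 2 → ℝ)).symm ⁻¹'
      (Set.univ.pi fun _ : Fin 2 => Set.Ico (0:ℝ) r) with hQdef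
  have hpiMeas : MeasurableSet (Set.univ.pi fun _ : Fin 2 => Set.Ico (0:ℝ) r) :=
    MeasurableSet.univ_pi fun _ => measurableSet_Ico
  have hQmeas : MeasurableSet Q := (MeasurableEquiv.toLp 2 (Fin 2 → ℝ)).symm.measurable hpiMeas
  have hQmem : ∀ s : E2, s ∈ Q ↔ ∀ i : Fin 2, s i ∈ Set.Ico (0:ℝ) r := by
    intro s
    simp only [hQdef, Set.mem_preimage, Set.mem_pi, Set.mem_univ, forall_true_left]
    rfl
  have hQvol : volume Q = ENNReal.ofReal r * ENNReal.ofReal r := by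
    rw [hQdef, (EuclideanSpace.volume_preserving_symm_measurableEquiv_toLp (Fin 2)).measure_preimage
      hpiMeas.nullMeasurableSet]
    rw [volume_pi_pi]
    simp only [Real.volume_Ico, sub_zero, Fin.prod_univ_two]
  -- the lattice
  set M : ℤ := ⌈1/r⌉ + 2 with hMdef
  have hM : (1:ℝ)/r + 3/2 ≤ (M:ℝ) := by
    have := Int.le_ceil ((1:ℝ)/r)
    push_cast [hMdef]
    linarith
  set L : Finset (ℤ × ℤ) := Finset.Icc (-M) M ×ˢ Finset.Icc (-M) M with hLdef
  set pt : ℤ × ℤ → E2 := fun q => (WithLp.equiv 2 (Fin 2 → ℝ)).symm ![(q.1:ℝ) * r, (q.2:ℝ) * r]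
    with hptdef
  have hpt0 : ∀ q, pt q 0 = (q.1:ℝ) * r := fun q => rfl
  have hpt1 : ∀ q, pt q 1 = (q.2:ℝ) * r := fun q => rfl
  -- the translated boxes
  set Qq : ℤ × ℤ → Set E2 := fun q => (fun x => -pt q + x) ⁻¹' Q with hQqdef
  have hQqmeas : ∀ q, MeasurableSet (Qq q) := fun q =>
    (measurable_const_add (-pt q)) hQmeas
  have hint_eq : ∀ q : ℤ × ℤ, ∫⁻ s in Q, G (pt q + s) ∂volume
      = (volume.withDensity G) (Qq q) := by
    intro q
    have h1 : ∀ s : E2, Q.indicator (fun u => G (pt q + u)) s = (Qq q).indicator G (pt q + s) := by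
      intro s
      have hmem : pt q + s ∈ Qq q ↔ s ∈ Q := by
        simp only [hQqdef, Set.mem_preimage, neg_add_cancel_left]
      by_cases hs : s ∈ Q
      · rw [Set.indicator_of_mem hs, Set.indicator_of_mem (hmem.mpr hs)]
      · rw [Set.indicator_of_notMem hs, Set.indicator_of_notMem (fun h => hs (hmem.mp h))]
    rw [← lintegral_indicator hQmeas]
    simp_rw [h1]
    rw [lintegral_add_left_eq_self ((Qq q).indicator G) (pt q),
      lintegral_indicator (hQqmeas q), withDensity_apply _ (hQqmeas q)]
  have hQqdisj : (↑L : Set (ℤ × ℤ)).PairwiseDisjoint Qq := by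
    intro q _ q' _ hne
    refine Set.disjoint_left.mpr fun x hx hx' => hne ?_
    have hx0 : ∀ i : Fin 2, -(pt q i) + x i ∈ Set.Ico (0:ℝ) r := by
      intro i
      have h := (hQmem (-pt q + x)).mp hx i
      rwa [hnegadd] at h
    have hx0' : ∀ i : Fin 2, -(pt q' i) + x i ∈ Set.Ico (0:ℝ) r := by
      intro i
      have h := (hQmem (-pt q' + x)).mp hx' i
      rwa [hnegadd] at h
    have e1 : q.1 = q'.1 := by
      have b1 := hx0 0; have b2 := hx0' 0
      rw [hpt0] at b1 b2
      rcases b1 with ⟨b1l, b1r⟩; rcases b2 with ⟨b2l, b2r⟩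
      by_contra hne1
      have h1 : q.1 - q'.1 ≥ 1 ∨ q.1 - q'.1 ≤ -1 := by omega
      rcases h1 with h | h
      · have : (1:ℝ) ≤ ((q.1 - q'.1 : ℤ) : ℝ) := by exact_mod_cast h
        push_cast at this
        nlinarith
      · have : ((q.1 - q'.1 : ℤ) : ℝ) ≤ -1 := by exact_mod_cast h
        push_cast at this
        nlinarith
    have e2 : q.2 = q'.2 := by
      have b1 := hx0 1; have b2 := hx0' 1
      rw [hpt1] at b1 b2
      rcases b1 with ⟨b1l, b1r⟩; rcases b2 with ⟨b2l, b2r⟩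
      by_contra hne2
      have h1 : q.2 - q'.2 ≥ 1 ∨ q.2 - q'.2 ≤ -1 := by omega
      rcases h1 with h | h
      · have : (1:ℝ) ≤ ((q.2 - q'.2 : ℤ) : ℝ) := by exact_mod_cast h
        push_cast at this
        nlinarith
      · have : ((q.2 - q'.2 : ℤ) : ℝ) ≤ -1 := by exact_mod_cast h
        push_cast at this
        nlinarith
    exact Prod.ext e1 e2
  -- the average bound
  have hGsum : ∫⁻ s in Q, (∑ q ∈ L, G (pt q + s)) ∂volume ≤ Etot * ENNReal.ofReal (2*π) := by
    rw [lintegral_finset_sum L (f := fun q s => G (pt q + s))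
      (fun q _ => by exact hG.comp (measurable_const_add (pt q)))]
    calc ∑ q ∈ L, ∫⁻ s in Q, G (pt q + s) ∂volume
        = ∑ q ∈ L, (volume.withDensity G) (Qq q) := Finset.sum_congr rfl fun q _ => hint_eq q
      _ = (volume.withDensity G) (⋃ q ∈ L, Qq q) :=
          (measure_biUnion_finset hQqdisj fun q _ => hQqmeas q).symm
      _ ≤ (volume.withDensity G) Set.univ := measure_mono (Set.subset_univ _)
      _ = ∫⁻ c, G c ∂volume := by
          rw [withDensity_apply _ MeasurableSet.univ, Measure.restrict_univ]
      _ = Etot * ENNReal.ofReal (2*π) := lintegral_G hg r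
  -- selection of a good translation
  obtain ⟨t, htQ, htF⟩ : ∃ t ∈ Q, (∑ q ∈ L, G (pt q + t)) ≤ ENNReal.ofReal (4*π/r^2) * Etot := by
    set F : E2 → ℝ≥0∞ := fun s => ∑ q ∈ L, G (pt q + s) with hFdef
    have hFmeas : Measurable F :=
      Finset.measurable_sum L fun q _ => hG.comp (measurable_const_add (pt q))
    have hQne : volume.restrict Q ≠ 0 := by
      intro h
      have h2 : volume Q = 0 := by
        rw [← Measure.restrict_apply_univ, h]; rfl
      rw [hQvol] at h2
      rcases mul_eq_zero.mp h2 with h3 | h3 <;>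
        · rw [ENNReal.ofReal_eq_zero] at h3; linarith
    by_cases hE0 : Etot = 0
    · have hzero : ∫⁻ s in Q, F s ∂volume = 0 := by
        refine le_antisymm ?_ zero_le
        calc ∫⁻ s in Q, F s ∂volume ≤ Etot * ENNReal.ofReal (2*π) := hGsum
          _ = 0 := by rw [hE0, zero_mul]
      have hae := (lintegral_eq_zero_iff hFmeas).mp hzero
      haveI : (ae (volume.restrict Q)).NeBot := MeasureTheory.ae_neBot.mpr hQne
      obtain ⟨s, hsQ, hs0⟩ := ((ae_restrict_mem hQmeas).and hae).exists
      refine ⟨s, hsQ, ?_⟩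
      rw [show (∑ q ∈ L, G (pt q + s)) = (0:ℝ≥0∞) from hs0]
      exact zero_le
    · by_contra hcon
      push_neg at hcon
      have hlow : ENNReal.ofReal (4*π/r^2) * Etot * volume Q ≤ ∫⁻ s in Q, F s ∂volume := by
        calc ENNReal.ofReal (4*π/r^2) * Etot * volume Q
            = ∫⁻ _ in Q, ENNReal.ofReal (4*π/r^2) * Etot ∂volume := (setLIntegral_const _ _).symm
          _ ≤ ∫⁻ s in Q, F s ∂volume := setLIntegral_mono hFmeas fun s hs => (hcon s hs).le
      have h4 : ENNReal.ofReal (4*π) * Etot ≤ ENNReal.ofReal (2*π) * Etot := by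
        have heq : ENNReal.ofReal (4*π) * Etot = ENNReal.ofReal (4*π/r^2) * Etot * volume Q := by
          rw [hQvol]
          rw [show ENNReal.ofReal (4*π/r^2) * Etot * (ENNReal.ofReal r * ENNReal.ofReal r)
            = (ENNReal.ofReal (4*π/r^2) * ENNReal.ofReal r * ENNReal.ofReal r) * Etot by ring]
          rw [← ENNReal.ofReal_mul (by positivity), ← ENNReal.ofReal_mul (by positivity)]
          rw [show 4*π/r^2 * r * r = 4*π by field_simp]
        calc ENNReal.ofReal (4*π) * Etot = ENNReal.ofReal (4*π/r^2) * Etot * volume Q := heq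
          _ ≤ ∫⁻ s in Q, F s ∂volume := hlow
          _ ≤ Etot * ENNReal.ofReal (2*π) := hGsum
          _ = ENNReal.ofReal (2*π) * Etot := mul_comm _ _
      rw [ENNReal.mul_le_mul_iff_left hE0 hEtop] at h4
      have h5 := (ENNReal.ofReal_le_ofReal_iff (by positivity)).mp h4
      nlinarith [Real.pi_pos]
  -- membership facts about t
  have htco : ∀ i : Fin 2, 0 ≤ t i ∧ t i < r := by
    intro i; exact (hQmem t).mp htQ i
  -- the answer
  refine ⟨L.card, fun i => pt ((L.equivFin.symm i) : ℤ × ℤ) + t, ?_, ?_, ?_⟩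
  · -- covering
    intro x hx
    have hx1 : ‖x‖ < 1 := by simpa [mem_ball, dist_zero_right] using hx
    have hxc : ∀ i : Fin 2, |x i| < 1 := fun i => lt_of_le_of_lt (coord_abs_le_norm x i) hx1
    set a0 : ℤ := round ((x 0 - t 0)/r) with ha0
    set a1 : ℤ := round ((x 1 - t 1)/r) with ha1
    have hr0 : ∀ i : Fin 2, |(x i - t i)/r - (round ((x i - t i)/r) : ℝ)| ≤ 1/2 := by
      intro i
      have := abs_sub_round ((x i - t i)/r)
      linarith [this]
    have hbound : ∀ i : Fin 2, |((round ((x i - t i)/r) : ℤ) : ℝ)| ≤ (M:ℝ) := by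
      intro i
      have h1 : |(x i - t i)/r| ≤ 1/r + 1 := by
        rw [abs_div, abs_of_pos hr, div_le_iff₀ hr]
        have : |x i - t i| ≤ |x i| + |t i| := abs_sub _ _
        have h2 : |t i| < r := by
          rw [abs_of_nonneg (htco i).1]; exact (htco i).2
        have h3 : (1/r + 1) * r = 1 + r := by field_simp
        rw [h3]
        nlinarith [(hxc i).le]
      have := hr0 i
      have h4 : |((round ((x i - t i)/r) : ℤ) : ℝ)| ≤ |(x i - t i)/r| + 1/2 := by
        have habs : |((round ((x i - t i)/r) : ℤ) : ℝ)| - |(x i - t i)/r| ≤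
            |((round ((x i - t i)/r) : ℤ) : ℝ) - (x i - t i)/r| := abs_sub_abs_le_abs_sub _ _
        rw [abs_sub_comm] at habs
        linarith [this]
      linarith [hM]
    have hmemIcc : ∀ i : Fin 2, round ((x i - t i)/r) ∈ Finset.Icc (-M) M := by
      intro i
      rw [Finset.mem_Icc]
      have := hbound i
      rw [← Int.cast_abs] at this
      have h6 : |round ((x i - t i)/r)| ≤ M := by exact_mod_cast this
      exact abs_le.mp h6
    have hqL : (a0, a1) ∈ L := by
      rw [hLdef, Finset.mem_product]
      exact ⟨hmemIcc 0, hmemIcc 1⟩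
    refine Set.mem_iUnion.mpr ⟨L.equivFin ⟨(a0, a1), hqL⟩, ?_⟩
    simp only [mem_ball, Equiv.symm_apply_apply]
    have hd0 : |x 0 - ((pt (a0, a1) + t) 0)| ≤ r/2 := by
      rw [hadd, hpt0]
      have : x 0 - ((a0:ℝ) * r + t 0) = r * ((x 0 - t 0)/r - (a0:ℝ)) := by field_simp; ring
      rw [this, abs_mul, abs_of_pos hr]
      have := hr0 0
      rw [← ha0] at this
      nlinarith
    have hd1 : |x 1 - ((pt (a0, a1) + t) 1)| ≤ r/2 := by
      rw [hadd, hpt1]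
      have : x 1 - ((a1:ℝ) * r + t 1) = r * ((x 1 - t 1)/r - (a1:ℝ)) := by field_simp; ring
      rw [this, abs_mul, abs_of_pos hr]
      have := hr0 1
      rw [← ha1] at this
      nlinarith
    rw [EuclideanSpace.dist_eq, Fin.sum_univ_two]
    rw [Real.dist_eq, Real.dist_eq]
    rw [Real.sqrt_lt' hr]
    nlinarith [abs_nonneg (x 0 - ((pt (a0, a1) + t) 0)), abs_nonneg (x 1 - ((pt (a0, a1) + t) 1))]
  · -- disjointness
    intro i j hij
    set qi := ((L.equivFin.symm i) : ℤ × ℤ) with hqi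
    set qj := ((L.equivFin.symm j) : ℤ × ℤ) with hqj
    have hqne : qi ≠ qj := by
      intro h
      exact hij (L.equivFin.symm.injective (Subtype.ext h))
    have hdge : r ≤ dist (pt qi + t) (pt qj + t) := by
      rw [dist_eq_norm, add_sub_add_right_eq_sub]
      have hcases : qi.1 ≠ qj.1 ∨ qi.2 ≠ qj.2 := by
        by_contra hc; push_neg at hc; exact hqne (Prod.ext hc.1 hc.2)
      have hkey : ∀ (a b : ℤ), a ≠ b → r ≤ |(a:ℝ) * r - (b:ℝ) * r| := by
        intro a b hab
        have heq : (a:ℝ) * r - (b:ℝ) * r = ((a - b : ℤ):ℝ) * r := by push_cast; ring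
        rw [heq, abs_mul, abs_of_pos hr]
        have h2 : (1:ℝ) ≤ |((a - b : ℤ):ℝ)| := by
          rw [← Int.cast_abs]
          exact_mod_cast Int.one_le_abs (sub_ne_zero.mpr hab)
        nlinarith
      rcases hcases with hc | hc
      · refine le_trans ?_ (coord_abs_le_norm (pt qi - pt qj) 0)
        rw [hsub, hpt0, hpt0]
        exact hkey _ _ hc
      · refine le_trans ?_ (coord_abs_le_norm (pt qi - pt qj) 1)
        rw [hsub, hpt1, hpt1]
        exact hkey _ _ hc
    refine Set.disjoint_left.mpr fun z hz1 hz2 => ?_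
    rw [mem_ball] at hz1 hz2
    have := dist_triangle (pt qi + t) z (pt qj + t)
    rw [dist_comm (pt qi + t) z] at this
    linarith
  · -- the flux bound
    have hflux : ∀ c : E2,
        (∫⁻ x in sphere c r, ENNReal.ofReal (|⟪V x, r⁻¹ • (x - c)⟫| ^ p) ∂μH[1])
          ≤ ENNReal.ofReal (2*r) * G c := by
      intro c
      refine le_trans (setLIntegral_mono hg fun x hx => ?_) (lintegral_sphere_le hg c hr)
      have hxs : dist x c = r := mem_sphere.mp hx
      have hnx : ‖r⁻¹ • (x - c)‖ = 1 := by
        rw [norm_smul, Real.norm_eq_abs, abs_of_pos (inv_pos.mpr hr), ← dist_eq_norm, hxs]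
        field_simp
      have h1 : |⟪V x, r⁻¹ • (x - c)⟫| ≤ ‖V x‖ := by
        have h2 := abs_real_inner_le_norm (V x) (r⁻¹ • (x - c))
        rwa [hnx, mul_one] at h2
      exact ENNReal.ofReal_le_ofReal (Real.rpow_le_rpow (abs_nonneg _) h1 hp0)
    calc ∑ i : Fin L.card, ∫⁻ x in sphere (pt ((L.equivFin.symm i) : ℤ × ℤ) + t) r,
          ENNReal.ofReal (|⟪V x, r⁻¹ • (x - (pt ((L.equivFin.symm i) : ℤ × ℤ) + t))⟫| ^ p) ∂μH[1]
        = ∑ q ∈ L, ∫⁻ x in sphere (pt q + t) r,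
            ENNReal.ofReal (|⟪V x, r⁻¹ • (x - (pt q + t))⟫| ^ p) ∂μH[1] := by
          rw [← Finset.sum_coe_sort L (fun q => ∫⁻ x in sphere (pt q + t) r,
            ENNReal.ofReal (|⟪V x, r⁻¹ • (x - (pt q + t))⟫| ^ p) ∂μH[1])]
          exact Fintype.sum_equiv L.equivFin.symm _ _ (fun i => rfl)
      _ ≤ ∑ q ∈ L, ENNReal.ofReal (2*r) * G (pt q + t) :=
          Finset.sum_le_sum fun q _ => hflux _
      _ = ENNReal.ofReal (2*r) * ∑ q ∈ L, G (pt q + t) := by rw [← Finset.mul_sum]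
      _ ≤ ENNReal.ofReal (2*r) * (ENNReal.ofReal (4*π/r^2) * Etot) := mul_le_mul_right htF _
      _ = ENNReal.ofReal (8 * π * r⁻¹) * Etot := by
          rw [← mul_assoc, ← ENNReal.ofReal_mul (by positivity)]
          congr 2
          field_simp
          ring

end GoodCoveringAux


open MeasureTheory Metric Real RealInnerProductSpace

/-- For every `1 ≤ p < ∞` there is `C = C(p) > 0` such that: for every Borel measurable
`V : ℝ² → ℝ²` vanishing outside the open unit ball, with `∫‖V‖^p < ∞`, and every
`0 < r ≤ 1`, there are finitely many balls of radius `r` covering the unit ball, whose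
half-radius concentric balls are pairwise disjoint, and such that the total `p`-flux
energy through the boundary circles is at most `C r⁻¹ ∫‖V‖^p`. -/
theorem good_covering_exists (p : ℝ) (hp : 1 ≤ p) :
    ∃ C : ℝ, 0 < C ∧
      ∀ (V : EuclideanSpace ℝ (Fin 2) → EuclideanSpace ℝ (Fin 2)),
        Measurable V →
        (∀ x, x ∉ ball (0 : EuclideanSpace ℝ (Fin 2)) 1 → V x = 0) →
        (∫⁻ x, ENNReal.ofReal (‖V x‖ ^ p) ∂volume) < ⊤ →
        ∀ r : ℝ, 0 < r → r ≤ 1 →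
        ∃ (N : ℕ) (y : Fin N → EuclideanSpace ℝ (Fin 2)),
          (ball (0 : EuclideanSpace ℝ (Fin 2)) 1 ⊆ ⋃ i, ball (y i) r) ∧
          (∀ i j : Fin N, i ≠ j → Disjoint (ball (y i) (r / 2)) (ball (y j) (r / 2))) ∧
          (∑ i : Fin N, ∫⁻ x in sphere (y i) r,
              ENNReal.ofReal (|⟪V x, r⁻¹ • (x - y i)⟫| ^ p) ∂μH[1])
            ≤ ENNReal.ofReal (C * r⁻¹) * ∫⁻ x, ENNReal.ofReal (‖V x‖ ^ p) ∂volume :=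
  GoodCoveringAux.main_theorem p hp
end
end

section
/- Let 1 ≤ p < ∞, let C ∈ ℕ, and let V : ℝ² → ℝ² be measurable with ∫_{ℝ²} ‖V‖^p dx < ∞. For each n ∈ ℕ let 𝓑_n be a finite family of open balls in ℝ² whose union contains the open unit ball B², such that no point of ℝ² belongs to more than C balls of 𝓑_n, and such that max_{B ∈ 𝓑_n} diam(B) → 0 as n → ∞. Then ∑_{B ∈ 𝓑_n} ∫_B ‖V(x) − V̄_B‖^p dx → 0 as n → ∞, where V̄_B = (1/|B|)∫_B V dx denotes the average of V over B (with |B| the Lebesgue measure of B). -/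
open MeasureTheory Metric Real Filter
open scoped ENNReal NNReal

lemma aux_rpow_add_le (a b : ℝ≥0∞) {p : ℝ} (hp : 0 ≤ p) :
    (a + b) ^ p ≤ 2 ^ p * (a ^ p + b ^ p) := by
  have h1 : a + b ≤ 2 * (a ⊔ b) := by
    rw [two_mul]
    exact add_le_add le_sup_left le_sup_right
  calc (a + b) ^ p ≤ (2 * (a ⊔ b)) ^ p := ENNReal.rpow_le_rpow h1 hp
    _ = 2 ^ p * (a ⊔ b) ^ p := ENNReal.mul_rpow_of_nonneg _ _ hp
    _ ≤ 2 ^ p * (a ^ p + b ^ p) := by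
        gcongr
        rcases le_total a b with h | h
        · rw [sup_eq_right.2 h]; exact le_add_self
        · rw [sup_eq_left.2 h]; exact self_le_add_right _ _

lemma aux_exists_eps {p : ℝ} (hp : 1 ≤ p) {τ : ℝ≥0∞} (hτ : 0 < τ) :
    ∃ ε : ℝ, 0 < ε ∧ ENNReal.ofReal (ε ^ p) ≤ τ := by
  set τ' := min τ 1 with hτ'
  have hτ'1 : τ' ≤ 1 := min_le_right _ _
  have hτ'0 : 0 < τ' := lt_min hτ (by norm_num)
  have hτ'top : τ' ≠ ⊤ := (lt_of_le_of_lt hτ'1 (by norm_num)).ne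
  refine ⟨min 1 τ'.toReal, lt_min one_pos (ENNReal.toReal_pos hτ'0.ne' hτ'top), ?_⟩
  have h1 : (min 1 τ'.toReal) ≤ 1 := min_le_left _ _
  have h0 : 0 < min 1 τ'.toReal := lt_min one_pos (ENNReal.toReal_pos hτ'0.ne' hτ'top)
  have h2 : (min 1 τ'.toReal) ^ p ≤ (min 1 τ'.toReal) ^ (1:ℝ) :=
    Real.rpow_le_rpow_of_exponent_ge h0 h1 hp
  rw [Real.rpow_one] at h2
  calc ENNReal.ofReal ((min 1 τ'.toReal) ^ p) ≤ ENNReal.ofReal (min 1 τ'.toReal) :=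
        ENNReal.ofReal_le_ofReal h2
    _ ≤ ENNReal.ofReal τ'.toReal := ENNReal.ofReal_le_ofReal (min_le_right _ _)
    _ = τ' := ENNReal.ofReal_toReal hτ'top
    _ ≤ τ := min_le_left _ _

lemma aux_overlap {α : Type*} [MeasurableSpace α] (μ : Measure α) {ι : Type*}
    (s : Finset ι) (U : ι → Set α) (hU : ∀ b, MeasurableSet (U b)) (C : ℕ)
    (hC : ∀ x, ({b | b ∈ s ∧ x ∈ U b} : Set ι).ncard ≤ C)
    (f : α → ℝ≥0∞) (hf : Measurable f) :
    ∑ b ∈ s, ∫⁻ x in U b, f x ∂μ ≤ C * ∫⁻ x, f x ∂μ := by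
  classical
  have h1 : ∀ b ∈ s, ∫⁻ x in U b, f x ∂μ = ∫⁻ x, (U b).indicator f x ∂μ := fun b _ =>
    (lintegral_indicator (hU b) f).symm
  rw [Finset.sum_congr rfl h1, ← lintegral_finset_sum s (fun b _ => hf.indicator (hU b))]
  rw [← lintegral_const_mul _ hf]
  refine lintegral_mono fun x => ?_
  have h2 : ∑ b ∈ s, (U b).indicator f x
      = ((s.filter (fun b => x ∈ U b)).card : ℝ≥0∞) * f x := by
    rw [Finset.card_eq_sum_ones, Nat.cast_sum]
    rw [Finset.sum_mul, Finset.sum_filter]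
    refine Finset.sum_congr rfl fun b _ => ?_
    by_cases hb : x ∈ U b <;> simp [Set.indicator, hb]
  rw [h2]
  have h3 : (s.filter (fun b => x ∈ U b)).card ≤ C := by
    have h5 : ({b | b ∈ s ∧ x ∈ U b} : Set ι) = ↑(s.filter (fun b => x ∈ U b)) := by
      ext b; simp [and_comm]
    have h4 := hC x
    rwa [h5, Set.ncard_coe_finset] at h4
  exact mul_le_mul_left (by exact_mod_cast h3 : ((s.filter (fun b => x ∈ U b)).card : ℝ≥0∞) ≤ C) _

lemma aux_jensen {α : Type*} [MeasurableSpace α] (μ : Measure α)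
    {E : Type*} [NormedAddCommGroup E] [NormedSpace ℝ E]
    {s : Set α} (h0 : μ s ≠ 0) (htop : μ s ≠ ⊤)
    {f : α → E} (hf : Integrable f (μ.restrict s)) {p : ℝ} (hp : 1 ≤ p) :
    μ s * (‖(μ s).toReal⁻¹ • ∫ x in s, f x ∂μ‖₊ : ℝ≥0∞) ^ p
      ≤ ∫⁻ x in s, (‖f x‖₊ : ℝ≥0∞) ^ p ∂μ := by
  have hp0 : (0:ℝ) < p := lt_of_lt_of_le one_pos hp
  set c : E := (μ s).toReal⁻¹ • ∫ x in s, f x ∂μ with hc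
  set I : ℝ≥0∞ := ∫⁻ x in s, (‖f x‖₊ : ℝ≥0∞) ∂μ with hI
  set J : ℝ≥0∞ := ∫⁻ x in s, (‖f x‖₊ : ℝ≥0∞) ^ p ∂μ with hJ
  have hμpos : 0 < (μ s).toReal := ENNReal.toReal_pos h0 htop
  have step1 : (‖c‖₊ : ℝ≥0∞) ≤ (μ s)⁻¹ * I := by
    have hnorm : ‖c‖ = (μ s).toReal⁻¹ * ‖∫ x in s, f x ∂μ‖ := by
      rw [hc, norm_smul, Real.norm_of_nonneg (by positivity)]
    have h2 : ENNReal.ofReal ‖∫ x in s, f x ∂μ‖ ≤ I := by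
      calc ENNReal.ofReal ‖∫ x in s, f x ∂μ‖
          ≤ ENNReal.ofReal (∫ x in s, ‖f x‖ ∂μ) :=
            ENNReal.ofReal_le_ofReal (norm_integral_le_integral_norm _)
        _ = I := ofReal_integral_norm_eq_lintegral_enorm hf
    calc (‖c‖₊ : ℝ≥0∞) = ENNReal.ofReal ‖c‖ := (ofReal_norm c).symm
      _ = ENNReal.ofReal ((μ s).toReal⁻¹) * ENNReal.ofReal ‖∫ x in s, f x ∂μ‖ := by
          rw [hnorm, ENNReal.ofReal_mul (by positivity)]
      _ ≤ (μ s)⁻¹ * I := by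
          gcongr
          rw [ENNReal.ofReal_inv_of_pos hμpos, ENNReal.ofReal_toReal htop]
  have step2 : I ≤ J ^ (1/p) * μ s ^ (1 - 1/p) := by
    have hle : (1 : ℝ≥0∞) ≤ ENNReal.ofReal p := by
      rw [← ENNReal.ofReal_one]; exact ENNReal.ofReal_le_ofReal hp
    have h := eLpNorm_le_eLpNorm_mul_rpow_measure_univ (μ := μ.restrict s)
      (p := 1) (q := ENNReal.ofReal p) hle hf.aestronglyMeasurable
    rw [eLpNorm_one_eq_lintegral_enorm,
      eLpNorm_eq_lintegral_rpow_enorm_toReal (ENNReal.ofReal_pos.2 hp0).ne'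
        ENNReal.ofReal_ne_top,
      Measure.restrict_apply_univ, ENNReal.toReal_ofReal hp0.le] at h
    simp at h ⊢; exact h
  have hμsp_ne_zero : μ s ^ p ≠ 0 := (ENNReal.rpow_pos (pos_iff_ne_zero.2 h0) htop).ne'
  have hμsp_ne_top : μ s ^ p ≠ ⊤ := ENNReal.rpow_ne_top_of_nonneg hp0.le htop
  calc μ s * (‖c‖₊ : ℝ≥0∞) ^ p ≤ μ s * ((μ s)⁻¹ * I) ^ p := by
        gcongr
    _ ≤ μ s * ((μ s)⁻¹ * (J ^ (1/p) * μ s ^ (1 - 1/p))) ^ p := by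
        gcongr
    _ = μ s * (((μ s)⁻¹) ^ p * ((J ^ (1/p)) ^ p * (μ s ^ (1 - 1/p)) ^ p)) := by
        rw [ENNReal.mul_rpow_of_nonneg _ _ hp0.le, ENNReal.mul_rpow_of_nonneg _ _ hp0.le]
    _ = μ s * ((μ s ^ p)⁻¹ * (J * μ s ^ ((1 - 1/p) * p))) := by
        rw [ENNReal.inv_rpow, ← ENNReal.rpow_mul J, one_div,
          inv_mul_cancel₀ hp0.ne', ENNReal.rpow_one, ← ENNReal.rpow_mul]
    _ = J * (μ s ^ ((1 - 1/p) * p) * μ s * (μ s ^ p)⁻¹) := by ring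
    _ = J := by
        have h6 : μ s ^ ((1 - 1/p) * p) * μ s = μ s ^ p := by
          calc μ s ^ ((1 - 1/p) * p) * μ s = μ s ^ ((1 - 1/p) * p) * μ s ^ (1:ℝ) := by
                rw [ENNReal.rpow_one]
            _ = μ s ^ ((1 - 1/p) * p + 1) := (ENNReal.rpow_add _ _ h0 htop).symm
            _ = μ s ^ p := by congr 1; field_simp; ring
        rw [h6, ENNReal.mul_inv_cancel hμsp_ne_zero hμsp_ne_top, mul_one]

lemma aux_sub_const {α : Type*} [MeasurableSpace α] (μ : Measure α)
    {E : Type*} [NormedAddCommGroup E]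
    {s : Set α} {f : α → E} (c : E) {p : ℝ} (hp : 0 ≤ p) :
    ∫⁻ x in s, (‖f x - c‖₊ : ℝ≥0∞) ^ p ∂μ
      ≤ 2 ^ p * ((∫⁻ x in s, (‖f x‖₊ : ℝ≥0∞) ^ p ∂μ) + μ s * (‖c‖₊ : ℝ≥0∞) ^ p) := by
  have h1 : ∀ x, (‖f x - c‖₊ : ℝ≥0∞) ^ p
      ≤ 2 ^ p * ((‖f x‖₊ : ℝ≥0∞) ^ p + (‖c‖₊ : ℝ≥0∞) ^ p) := fun x => by
    refine le_trans ?_ (aux_rpow_add_le _ _ hp)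
    refine ENNReal.rpow_le_rpow ?_ hp
    exact_mod_cast nnnorm_sub_le (f x) c
  calc ∫⁻ x in s, (‖f x - c‖₊ : ℝ≥0∞) ^ p ∂μ
      ≤ ∫⁻ x in s, 2 ^ p * ((‖f x‖₊ : ℝ≥0∞) ^ p + (‖c‖₊ : ℝ≥0∞) ^ p) ∂μ :=
        lintegral_mono h1
    _ = 2 ^ p * ∫⁻ x in s, ((‖f x‖₊ : ℝ≥0∞) ^ p + (‖c‖₊ : ℝ≥0∞) ^ p) ∂μ :=
        lintegral_const_mul' _ _ (by simp [ENNReal.rpow_ne_top_of_nonneg hp])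
    _ = 2 ^ p * ((∫⁻ x in s, (‖f x‖₊ : ℝ≥0∞) ^ p ∂μ) + μ s * (‖c‖₊ : ℝ≥0∞) ^ p) := by
        rw [lintegral_add_right _ measurable_const, setLIntegral_const]; ring

lemma aux_dev {α : Type*} [MeasurableSpace α] (μ : Measure α)
    {E : Type*} [NormedAddCommGroup E] [NormedSpace ℝ E]
    {s : Set α} (h0 : μ s ≠ 0) (htop : μ s ≠ ⊤)
    {f : α → E} (hf : Integrable f (μ.restrict s)) {p : ℝ} (hp : 1 ≤ p) :
    ∫⁻ x in s, (‖f x - (μ s).toReal⁻¹ • ∫ y in s, f y ∂μ‖₊ : ℝ≥0∞) ^ p ∂μ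
      ≤ 2 ^ p * 2 * ∫⁻ x in s, (‖f x‖₊ : ℝ≥0∞) ^ p ∂μ := by
  calc ∫⁻ x in s, (‖f x - (μ s).toReal⁻¹ • ∫ y in s, f y ∂μ‖₊ : ℝ≥0∞) ^ p ∂μ
      ≤ 2 ^ p * ((∫⁻ x in s, (‖f x‖₊ : ℝ≥0∞) ^ p ∂μ)
          + μ s * (‖(μ s).toReal⁻¹ • ∫ y in s, f y ∂μ‖₊ : ℝ≥0∞) ^ p) :=
        aux_sub_const μ _ (le_trans zero_le_one hp)
    _ ≤ 2 ^ p * ((∫⁻ x in s, (‖f x‖₊ : ℝ≥0∞) ^ p ∂μ)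
          + ∫⁻ x in s, (‖f x‖₊ : ℝ≥0∞) ^ p ∂μ) := by
        gcongr
        exact aux_jensen μ h0 htop hf hp
    _ = 2 ^ p * 2 * ∫⁻ x in s, (‖f x‖₊ : ℝ≥0∞) ^ p ∂μ := by ring

lemma aux_osc {α : Type*} [MeasurableSpace α] (μ : Measure α)
    {E : Type*} [NormedAddCommGroup E] [NormedSpace ℝ E] [CompleteSpace E]
    {s : Set α} (h0 : μ s ≠ 0) (htop : μ s ≠ ⊤)
    {g : α → E} (hg : Integrable g (μ.restrict s)) {x : α} {ε : ℝ}
    (hbd : ∀ y ∈ s, ‖g x - g y‖ ≤ ε) :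
    ‖g x - (μ s).toReal⁻¹ • ∫ y in s, g y ∂μ‖ ≤ ε := by
  have hμpos : 0 < (μ s).toReal := ENNReal.toReal_pos h0 htop
  have hεnn : 0 ≤ ε := by
    obtain ⟨y, hy⟩ := MeasureTheory.nonempty_of_measure_ne_zero h0
    exact le_trans (norm_nonneg _) (hbd y hy)
  have key : g x - (μ s).toReal⁻¹ • ∫ y in s, g y ∂μ
      = (μ s).toReal⁻¹ • ∫ y in s, (g x - g y) ∂μ := by
    rw [integral_sub (show IntegrableOn (fun _ => g x) s μ from integrableOn_const htop) hg]
    rw [setIntegral_const, smul_sub, smul_smul, measureReal_def, inv_mul_cancel₀ hμpos.ne', one_smul]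
  rw [key, norm_smul, Real.norm_of_nonneg (by positivity)]
  have h2 : ‖∫ y in s, (g x - g y) ∂μ‖ ≤ ε * (μ s).toReal :=
    norm_setIntegral_le_of_norm_le_const_ae' (lt_top_iff_ne_top.2 htop)
      (Eventually.of_forall (fun y hy => hbd y hy))
  calc (μ s).toReal⁻¹ * ‖∫ y in s, (g x - g y) ∂μ‖
      ≤ (μ s).toReal⁻¹ * (ε * (μ s).toReal) := by gcongr
    _ = ε := by field_simp

set_option maxHeartbeats 2000000 in
/-- If `𝓑 n` are finite families of open balls covering the unit ball `B²`, with
overlap bounded by `C` and maximal diameter tending to `0`, and `V ∈ L^p(ℝ², ℝ²)`,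
then `∑_{B ∈ 𝓑_n} ∫_B ‖V − V̄_B‖^p dx → 0`, where `V̄_B` is the average of `V`
over `B`. Each ball is encoded as a (center, radius) pair. -/
theorem sum_deviation_from_average_tendsto_zero (p : ℝ) (hp : 1 ≤ p) (C : ℕ)
    (V : EuclideanSpace ℝ (Fin 2) → EuclideanSpace ℝ (Fin 2))
    (hVmeas : Measurable V)
    (hVLp : ∫⁻ x, ENNReal.ofReal (‖V x‖ ^ p) ∂volume < ⊤)
    (𝓑 : ℕ → Finset (EuclideanSpace ℝ (Fin 2) × ℝ))
    (hrad : ∀ n, ∀ b ∈ 𝓑 n, 0 < b.2)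
    (hcover : ∀ n, ball (0 : EuclideanSpace ℝ (Fin 2)) 1 ⊆ ⋃ b ∈ 𝓑 n, ball b.1 b.2)
    (hoverlap : ∀ n, ∀ x : EuclideanSpace ℝ (Fin 2),
      ({b | b ∈ 𝓑 n ∧ x ∈ ball b.1 b.2} :
        Set (EuclideanSpace ℝ (Fin 2) × ℝ)).ncard ≤ C)
    (hdiam : ∀ δ : ℝ, 0 < δ → ∃ n₀ : ℕ, ∀ n ≥ n₀, ∀ b ∈ 𝓑 n,
      Metric.diam (ball b.1 b.2) ≤ δ) :
    Tendsto (fun n => ∑ b ∈ 𝓑 n,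
        ∫ x in ball b.1 b.2,
          ‖V x - (volume (ball b.1 b.2)).toReal⁻¹ • (∫ y in ball b.1 b.2, V y)‖ ^ p)
      atTop (nhds 0) := by
  classical
  have hp0 : (0:ℝ) < p := lt_of_lt_of_le one_pos hp
  set P : ℝ≥0∞ := ENNReal.ofReal p with hP
  have hP0 : P ≠ 0 := (ENNReal.ofReal_pos.2 hp0).ne'
  have hPtop : P ≠ ⊤ := ENNReal.ofReal_ne_top
  have hP1 : (1:ℝ≥0∞) ≤ P := by
    rw [hP, ← ENNReal.ofReal_one]; exact ENNReal.ofReal_le_ofReal hp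
  have hPt : P.toReal = p := ENNReal.toReal_ofReal hp0.le
  have h2p0 : (2:ℝ≥0∞) ^ p ≠ 0 := (ENNReal.rpow_pos (by norm_num) (by norm_num)).ne'
  have h2ptop : (2:ℝ≥0∞) ^ p ≠ ⊤ := ENNReal.rpow_ne_top_of_nonneg hp0.le (by norm_num)
  -- rephrase the L^p hypothesis
  have hVlp' : ∫⁻ x, (‖V x‖₊ : ℝ≥0∞) ^ p ∂volume < ⊤ := by
    refine lt_of_eq_of_lt (lintegral_congr fun x => ?_) hVLp
    rw [← enorm_eq_nnnorm, ← ofReal_norm, ← ENNReal.ofReal_rpow_of_nonneg (norm_nonneg _) hp0.le]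
  have hVmem : MemLp V P volume := by
    refine ⟨hVmeas.aestronglyMeasurable, ?_⟩
    rw [eLpNorm_eq_lintegral_rpow_enorm_toReal hP0 hPtop, hPt]
    exact ENNReal.rpow_lt_top_of_nonneg (by positivity) hVlp'.ne
  -- ball facts
  have hball : ∀ n, ∀ b ∈ 𝓑 n, volume (ball b.1 b.2) ≠ 0 ∧ volume (ball b.1 b.2) ≠ ⊤ :=
    fun n b hb => ⟨(measure_ball_pos volume b.1 (hrad n b hb)).ne', measure_ball_lt_top.ne⟩
  have hVint : ∀ n, ∀ b ∈ 𝓑 n, Integrable V (volume.restrict (ball b.1 b.2)) := by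
    intro n b hb
    haveI : IsFiniteMeasure (volume.restrict (ball b.1 b.2)) :=
      ⟨by rw [Measure.restrict_apply_univ]; exact measure_ball_lt_top⟩
    exact (hVmem.restrict _).integrable hP1
  -- the ENNReal-valued sums
  set T : ℕ → (EuclideanSpace ℝ (Fin 2) × ℝ) → ℝ≥0∞ := fun n b =>
    ∫⁻ x in ball b.1 b.2,
      (‖V x - (volume (ball b.1 b.2)).toReal⁻¹ • ∫ y in ball b.1 b.2, V y‖₊ : ℝ≥0∞) ^ p
      ∂volume with hT
  have hTfin : ∀ n, ∀ b ∈ 𝓑 n, T n b ≠ ⊤ := by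
    intro n b hb
    refine ne_of_lt (lt_of_le_of_lt
      (aux_dev volume (hball n b hb).1 (hball n b hb).2 (hVint n b hb) hp) ?_)
    refine ENNReal.mul_lt_top ?_ ?_
    · exact lt_top_iff_ne_top.2 (ENNReal.mul_ne_top h2ptop (by norm_num))
    · exact lt_of_le_of_lt (setLIntegral_le_lintegral _ _) hVlp'
  have hreal : ∀ n, ∀ b ∈ 𝓑 n,
      (∫ x in ball b.1 b.2,
        ‖V x - (volume (ball b.1 b.2)).toReal⁻¹ • (∫ y in ball b.1 b.2, V y)‖ ^ p)
      = (T n b).toReal := by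
    intro n b hb
    rw [integral_eq_lintegral_of_nonneg_ae (f := fun x =>
        ‖V x - (volume (ball b.1 b.2)).toReal⁻¹ • (∫ y in ball b.1 b.2, V y)‖ ^ p)
      (Eventually.of_forall fun x => Real.rpow_nonneg (norm_nonneg _) p)
      (((Real.continuous_rpow_const hp0.le).measurable.comp
        (hVmeas.sub measurable_const).norm).aestronglyMeasurable)]
    congr 1
    refine lintegral_congr fun x => ?_
    rw [← enorm_eq_nnnorm, ← ofReal_norm, ← ENNReal.ofReal_rpow_of_nonneg (norm_nonneg _) hp0.le]
  have hgoal_eq : ∀ n,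
      (∑ b ∈ 𝓑 n, ∫ x in ball b.1 b.2,
        ‖V x - (volume (ball b.1 b.2)).toReal⁻¹ • (∫ y in ball b.1 b.2, V y)‖ ^ p)
      = (∑ b ∈ 𝓑 n, T n b).toReal := by
    intro n
    rw [ENNReal.toReal_sum (fun b hb => hTfin n b hb)]
    exact Finset.sum_congr rfl (fun b hb => hreal n b hb)
  suffices hL : Tendsto (fun n => ∑ b ∈ 𝓑 n, T n b) atTop (nhds 0) by
    have h2 := (ENNReal.tendsto_toReal (by simp : (0:ℝ≥0∞) ≠ ⊤)).comp hL
    rw [ENNReal.toReal_zero] at h2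
    exact h2.congr (fun n => (hgoal_eq n).symm)
  refine ENNReal.tendsto_nhds_zero.2 fun ε hε => ?_
  set ε' : ℝ≥0∞ := min ε 1 with hε'
  have hε'0 : (0:ℝ≥0∞) < ε' := lt_min hε (by norm_num)
  have hε'top : ε' ≠ ⊤ := (lt_of_le_of_lt (min_le_right _ _) (by norm_num)).ne
  -- choice of g
  set K₁ : ℝ≥0∞ := 2 ^ p * (2 ^ p * 2) * ((C:ℝ≥0∞) + 1) with hK₁
  have hK₁0 : K₁ ≠ 0 := by
    simp only [hK₁]
    exact mul_ne_zero (mul_ne_zero h2p0 (mul_ne_zero h2p0 (by norm_num)))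
      (by simp)
  have hK₁top : K₁ ≠ ⊤ := by
    simp only [hK₁]
    exact ENNReal.mul_ne_top (ENNReal.mul_ne_top h2ptop
      (ENNReal.mul_ne_top h2ptop (by norm_num))) (by simp)
  set τ₁ : ℝ≥0∞ := ε' / 2 / K₁ with hτ₁
  have hτ₁0 : 0 < τ₁ := ENNReal.div_pos (ENNReal.div_pos hε'0.ne' (by norm_num)).ne' hK₁top
  have hτ₁top : τ₁ ≠ ⊤ := by
    refine (ENNReal.div_lt_top ?_ hK₁0).ne
    exact (ENNReal.div_lt_top hε'top (by norm_num)).ne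
  set η : ℝ≥0∞ := τ₁ ^ (1/p) with hη
  have hη0 : η ≠ 0 := (ENNReal.rpow_pos hτ₁0 hτ₁top).ne'
  obtain ⟨g, g_cs, hg_close, g_cont, g_mem⟩ :=
    hVmem.exists_hasCompactSupport_eLpNorm_sub_le hPtop hη0
  have hh_meas : Measurable fun x => V x - g x := hVmeas.sub g_cont.measurable
  -- h := V - g is small in L^p
  have hh_lp : ∫⁻ x, (‖V x - g x‖₊ : ℝ≥0∞) ^ p ∂volume ≤ τ₁ := by
    have e1 : eLpNorm (V - g) P volume
        = (∫⁻ x, (‖V x - g x‖₊ : ℝ≥0∞) ^ p ∂volume) ^ (1/p) := by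
      rw [eLpNorm_eq_lintegral_rpow_enorm_toReal hP0 hPtop, hPt]
      rfl
    have e2 : ∫⁻ x, (‖V x - g x‖₊ : ℝ≥0∞) ^ p ∂volume
        = (eLpNorm (V - g) P volume) ^ p := by
      rw [e1, ← ENNReal.rpow_mul, one_div, inv_mul_cancel₀ hp0.ne', ENNReal.rpow_one]
    rw [e2]
    calc (eLpNorm (V - g) P volume) ^ p ≤ η ^ p := ENNReal.rpow_le_rpow hg_close hp0.le
      _ = τ₁ := by
        rw [hη, ← ENNReal.rpow_mul, one_div, inv_mul_cancel₀ hp0.ne', ENNReal.rpow_one]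
  -- support of g
  obtain ⟨R, hR⟩ := g_cs.isBounded.subset_ball (0 : EuclideanSpace ℝ (Fin 2))
  set A : Set (EuclideanSpace ℝ (Fin 2)) := ball 0 (R + 2) with hA
  have hAmeas : MeasurableSet A := measurableSet_ball
  have hAvol : volume A ≠ ⊤ := measure_ball_lt_top.ne
  -- choice of ε₁ and δ
  set K₂ : ℝ≥0∞ := 2 ^ p * ((C:ℝ≥0∞) + 1) * (volume A + 1) with hK₂
  have hK₂0 : K₂ ≠ 0 := by
    simp only [hK₂]
    exact mul_ne_zero (mul_ne_zero h2p0 (by simp)) (by simp)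
  have hK₂top : K₂ ≠ ⊤ := by
    simp only [hK₂]
    exact ENNReal.mul_ne_top (ENNReal.mul_ne_top h2ptop (by simp))
      (ENNReal.add_ne_top.2 ⟨hAvol, by norm_num⟩)
  set τ₂ : ℝ≥0∞ := ε' / 2 / K₂ with hτ₂
  have hτ₂0 : 0 < τ₂ := ENNReal.div_pos (ENNReal.div_pos hε'0.ne' (by norm_num)).ne' hK₂top
  obtain ⟨ε₁, hε₁0, hε₁⟩ := aux_exists_eps hp hτ₂0
  have hgu := g_cs.uniformContinuous_of_continuous g_cont
  obtain ⟨δ, hδ0, hδ⟩ := Metric.uniformContinuous_iff.1 hgu ε₁ hε₁0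
  set δ' : ℝ := min (δ/2) 1 with hδ'
  have hδ'0 : 0 < δ' := lt_min (by positivity) one_pos
  obtain ⟨n₀, hn₀⟩ := hdiam δ' hδ'0
  filter_upwards [eventually_ge_atTop n₀] with n hn
  -- per-ball estimate
  have key : ∀ b ∈ 𝓑 n, T n b
      ≤ 2 ^ p * (ENNReal.ofReal (ε₁ ^ p)
          * ∫⁻ x in ball b.1 b.2, A.indicator (1 : EuclideanSpace ℝ (Fin 2) → ℝ≥0∞) x ∂volume
        + 2 ^ p * 2 * ∫⁻ x in ball b.1 b.2, (‖V x - g x‖₊ : ℝ≥0∞) ^ p ∂volume) := by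
    intro b hb
    set B : Set (EuclideanSpace ℝ (Fin 2)) := ball b.1 b.2 with hBdef
    have hB0 : volume B ≠ 0 := (hball n b hb).1
    have hBtop : volume B ≠ ⊤ := (hball n b hb).2
    haveI : IsFiniteMeasure (volume.restrict B) :=
      ⟨by rw [Measure.restrict_apply_univ]; exact measure_ball_lt_top⟩
    have hgint : Integrable g (volume.restrict B) := (g_mem.restrict _).integrable hP1
    have hVintB : Integrable V (volume.restrict B) := hVint n b hb
    have hhint : Integrable (fun x => V x - g x) (volume.restrict B) := hVintB.sub hgint
    have hdiamB : diam B ≤ δ' := hn₀ n hn b hb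
    -- averages
    set cg : EuclideanSpace ℝ (Fin 2) := (volume B).toReal⁻¹ • ∫ y in B, g y with hcg
    set ch : EuclideanSpace ℝ (Fin 2) :=
      (volume B).toReal⁻¹ • ∫ y in B, (V y - g y) with hch
    have havg : (volume B).toReal⁻¹ • (∫ y in B, V y) = cg + ch := by
      have e3 : ∫ y in B, V y = (∫ y in B, g y) + ∫ y in B, (V y - g y) := by
        rw [← integral_add hgint hhint]
        simp
      rw [e3, smul_add]
    -- pointwise split
    have hsplit : ∀ x, V x - (volume B).toReal⁻¹ • (∫ y in B, V y)
        = (g x - cg) + ((V x - g x) - ch) := by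
      intro x; rw [havg]; abel
    have hptwise : ∀ x,
        (‖V x - (volume B).toReal⁻¹ • (∫ y in B, V y)‖₊ : ℝ≥0∞) ^ p
        ≤ 2 ^ p * ((‖g x - cg‖₊ : ℝ≥0∞) ^ p + (‖(V x - g x) - ch‖₊ : ℝ≥0∞) ^ p) := by
      intro x
      refine le_trans ?_ (aux_rpow_add_le _ _ hp0.le)
      refine ENNReal.rpow_le_rpow ?_ hp0.le
      rw [hsplit x]
      exact_mod_cast nnnorm_add_le _ _
    have hmeas2 : Measurable fun x => (‖(V x - g x) - ch‖₊ : ℝ≥0∞) ^ p :=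
      ENNReal.continuous_rpow_const.measurable.comp
        ((hh_meas.sub measurable_const).nnnorm.coe_nnreal_ennreal)
    have step : T n b ≤ 2 ^ p * ((∫⁻ x in B, (‖g x - cg‖₊ : ℝ≥0∞) ^ p ∂volume)
        + ∫⁻ x in B, (‖(V x - g x) - ch‖₊ : ℝ≥0∞) ^ p ∂volume) := by
      calc T n b ≤ ∫⁻ x in B, 2 ^ p * ((‖g x - cg‖₊ : ℝ≥0∞) ^ p
            + (‖(V x - g x) - ch‖₊ : ℝ≥0∞) ^ p) ∂volume := lintegral_mono hptwise
        _ = 2 ^ p * ((∫⁻ x in B, (‖g x - cg‖₊ : ℝ≥0∞) ^ p ∂volume)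
            + ∫⁻ x in B, (‖(V x - g x) - ch‖₊ : ℝ≥0∞) ^ p ∂volume) := by
          rw [lintegral_const_mul' _ _ h2ptop, lintegral_add_right _ hmeas2]
    refine le_trans step ?_
    gcongr 2 ^ p * (?_ + ?_)
    · -- g part
      by_cases hBS : (B ∩ tsupport g).Nonempty
      · -- B meets the support: B ⊆ A and oscillation small
        have hBsubA : B ⊆ A := by
          obtain ⟨y, hyB, hyS⟩ := hBS
          intro x hx
          have h7 : dist x y ≤ δ' := le_trans (dist_le_diam_of_mem isBounded_ball hx hyB)
            hdiamB
          have h8 : dist y 0 < R := mem_ball.1 (hR hyS)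
          have h9 : dist x 0 < R + 2 := by
            calc dist x 0 ≤ dist x y + dist y 0 := dist_triangle _ _ _
              _ ≤ δ' + dist y 0 := by gcongr
              _ ≤ 1 + dist y 0 := by have := min_le_right (δ/2) 1; gcongr
              _ < R + 2 := by linarith
          exact mem_ball.2 h9
        have hosc : ∀ x ∈ B, ‖g x - cg‖ ≤ ε₁ := by
          intro x hx
          refine aux_osc volume hB0 hBtop hgint fun y hy => ?_
          have h7 : dist x y ≤ δ' := le_trans (dist_le_diam_of_mem isBounded_ball hx hy)
            hdiamB
          have h8 : dist x y < δ := lt_of_le_of_lt (le_trans h7 (min_le_left _ _))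
            (by linarith)
          rw [← dist_eq_norm]
          exact (hδ h8).le
        calc ∫⁻ x in B, (‖g x - cg‖₊ : ℝ≥0∞) ^ p ∂volume
            ≤ ∫⁻ _x in B, ENNReal.ofReal (ε₁ ^ p) ∂volume := by
              refine setLIntegral_mono' measurableSet_ball fun x hx => ?_
              rw [← enorm_eq_nnnorm, ← ofReal_norm,
                ENNReal.ofReal_rpow_of_nonneg (norm_nonneg _) hp0.le]
              exact ENNReal.ofReal_le_ofReal
                (Real.rpow_le_rpow (norm_nonneg _) (hosc x hx) hp0.le)
          _ = ENNReal.ofReal (ε₁ ^ p) * volume B := setLIntegral_const _ _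
          _ = ENNReal.ofReal (ε₁ ^ p)
              * ∫⁻ x in B, A.indicator (1 : EuclideanSpace ℝ (Fin 2) → ℝ≥0∞) x ∂volume := by
            congr 1
            rw [lintegral_indicator hAmeas, Measure.restrict_restrict hAmeas]
            simp [Set.inter_eq_right.2 hBsubA]
      · -- B misses the support: g vanishes on B
        have hg0 : ∀ x ∈ B, g x = 0 := by
          intro x hx
          by_contra hgx
          exact hBS ⟨x, hx, subset_tsupport g hgx⟩
        have hint0 : ∫ y in B, g y = 0 := by
          rw [setIntegral_congr_fun measurableSet_ball
            (fun x hx => hg0 x hx : Set.EqOn g 0 B)]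
          simp
        have hcg0 : cg = 0 := by rw [hcg, hint0, smul_zero]
        have : ∫⁻ x in B, (‖g x - cg‖₊ : ℝ≥0∞) ^ p ∂volume = 0 := by
          rw [← lintegral_zero (μ := volume.restrict B)]
          refine setLIntegral_congr_fun measurableSet_ball
            (fun x hx => ?_)
          rw [hcg0, hg0 x hx, sub_zero, nnnorm_zero, ENNReal.coe_zero,
            ENNReal.zero_rpow_of_pos hp0]
        rw [this]
        exact zero_le
    · -- h part
      exact aux_dev volume hB0 hBtop hhint hp
  -- sum up
  have hsum : ∑ b ∈ 𝓑 n, T n b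
      ≤ 2 ^ p * (ENNReal.ofReal (ε₁ ^ p) * ((C:ℝ≥0∞) * volume A)
        + 2 ^ p * 2 * ((C:ℝ≥0∞) * ∫⁻ x, (‖V x - g x‖₊ : ℝ≥0∞) ^ p ∂volume)) := by
    calc ∑ b ∈ 𝓑 n, T n b
        ≤ ∑ b ∈ 𝓑 n, 2 ^ p * (ENNReal.ofReal (ε₁ ^ p)
            * ∫⁻ x in ball b.1 b.2, A.indicator (1 : EuclideanSpace ℝ (Fin 2) → ℝ≥0∞) x ∂volume
          + 2 ^ p * 2 * ∫⁻ x in ball b.1 b.2, (‖V x - g x‖₊ : ℝ≥0∞) ^ p ∂volume) :=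
          Finset.sum_le_sum key
      _ = 2 ^ p * (ENNReal.ofReal (ε₁ ^ p)
            * ∑ b ∈ 𝓑 n, ∫⁻ x in ball b.1 b.2, A.indicator (1 : EuclideanSpace ℝ (Fin 2) → ℝ≥0∞) x ∂volume
          + 2 ^ p * 2
            * ∑ b ∈ 𝓑 n, ∫⁻ x in ball b.1 b.2, (‖V x - g x‖₊ : ℝ≥0∞) ^ p ∂volume) := by
          rw [← Finset.mul_sum, Finset.sum_add_distrib, ← Finset.mul_sum, ← Finset.mul_sum]
      _ ≤ 2 ^ p * (ENNReal.ofReal (ε₁ ^ p)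
            * ((C:ℝ≥0∞) * ∫⁻ x, A.indicator (1 : EuclideanSpace ℝ (Fin 2) → ℝ≥0∞) x ∂volume)
          + 2 ^ p * 2 * ((C:ℝ≥0∞) * ∫⁻ x, (‖V x - g x‖₊ : ℝ≥0∞) ^ p ∂volume)) := by
          gcongr
          · exact aux_overlap volume (𝓑 n) _ (fun b => measurableSet_ball) C
              (hoverlap n) _ (measurable_one.indicator hAmeas)
          · exact aux_overlap volume (𝓑 n) _ (fun b => measurableSet_ball) C
              (hoverlap n) _ (ENNReal.continuous_rpow_const.measurable.comp
                hh_meas.nnnorm.coe_nnreal_ennreal)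
      _ = 2 ^ p * (ENNReal.ofReal (ε₁ ^ p) * ((C:ℝ≥0∞) * volume A)
          + 2 ^ p * 2 * ((C:ℝ≥0∞) * ∫⁻ x, (‖V x - g x‖₊ : ℝ≥0∞) ^ p ∂volume)) := by
          rw [lintegral_indicator_one hAmeas]
  refine le_trans hsum ?_
  have hbound1 : 2 ^ p * (ENNReal.ofReal (ε₁ ^ p) * ((C:ℝ≥0∞) * volume A)) ≤ ε' / 2 := by
    calc 2 ^ p * (ENNReal.ofReal (ε₁ ^ p) * ((C:ℝ≥0∞) * volume A))
        ≤ 2 ^ p * (τ₂ * (((C:ℝ≥0∞) + 1) * (volume A + 1))) := by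
          gcongr <;> simp
      _ = K₂ * τ₂ := by rw [hK₂]; ring
      _ ≤ ε' / 2 := ENNReal.mul_div_le
  have hbound2 : 2 ^ p * (2 ^ p * 2
      * ((C:ℝ≥0∞) * ∫⁻ x, (‖V x - g x‖₊ : ℝ≥0∞) ^ p ∂volume)) ≤ ε' / 2 := by
    calc 2 ^ p * (2 ^ p * 2 * ((C:ℝ≥0∞) * ∫⁻ x, (‖V x - g x‖₊ : ℝ≥0∞) ^ p ∂volume))
        ≤ 2 ^ p * (2 ^ p * 2 * (((C:ℝ≥0∞) + 1) * τ₁)) := by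
          gcongr
          · simp
      _ = K₁ * τ₁ := by rw [hK₁]; ring
      _ ≤ ε' / 2 := ENNReal.mul_div_le
  calc 2 ^ p * (ENNReal.ofReal (ε₁ ^ p) * ((C:ℝ≥0∞) * volume A)
        + 2 ^ p * 2 * ((C:ℝ≥0∞) * ∫⁻ x, (‖V x - g x‖₊ : ℝ≥0∞) ^ p ∂volume))
      = 2 ^ p * (ENNReal.ofReal (ε₁ ^ p) * ((C:ℝ≥0∞) * volume A))
        + 2 ^ p * (2 ^ p * 2 * ((C:ℝ≥0∞) * ∫⁻ x, (‖V x - g x‖₊ : ℝ≥0∞) ^ p ∂volume)) := by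
        ring
    _ ≤ ε' / 2 + ε' / 2 := add_le_add hbound1 hbound2
    _ = ε' := ENNReal.add_halves _
    _ ≤ ε := min_le_left _ _
end

section
/- Let p > 1. There is a constant C = C(p) > 0 with the following property. Let 0 < ε ≤ 1, let V : ℝ² → ℝ² be a Borel measurable vector field, and let B₁,…,B_N be balls in ℝ², B_i = B_{r_i}(x_i) with 0 < r_i ≤ ε. Call a ball B_i bad if the flux ∫_{∂B_i} ⟨V(y), (y−x_i)/r_i⟩ dH¹(y) belongs to 2πℤ∖{0}. Then the number of bad balls is at most C ε^{p−1} ∑_{i=1}^N ∫_{∂B_i} |⟨V(y), (y−x_i)/r_i⟩|^p dH¹(y). In particular, if ∑_{i=1}^N ∫_{∂B_i} |⟨V, n_{B_i}⟩|^p dH¹ ≤ K ε^{−1} ∫_{ℝ²} ‖V‖^p dx for some K > 0, then the number of bad balls is at most C K ε^{p−2} ∫_{ℝ²} ‖V‖^p dx. -/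
open MeasureTheory Metric Real RealInnerProductSpace
open scoped NNReal ENNReal

lemma sphere_hausdorff_le (x : EuclideanSpace ℝ (Fin 2)) {R : ℝ} (hR : 0 ≤ R) :
    μH[1] (sphere x R) ≤ ENNReal.ofReal (2 * π * R) := by
  set e : ℂ ≃ₗᵢ[ℝ] EuclideanSpace ℝ (Fin 2) :=
    Complex.isometryOfOrthonormal (EuclideanSpace.basisFun (Fin 2) ℝ) with he
  have h1 : sphere x R = e '' sphere (e.symm x) R := by
    rw [e.image_sphere, e.apply_symm_apply]
  have h2 : μH[1] (sphere x R) = μH[1] (sphere (e.symm x) R : Set ℂ) := by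
    rw [h1, e.isometry.hausdorffMeasure_image (Or.inr e.surjective)]
  set c : ℂ := e.symm x
  have h3 : (sphere c R : Set ℂ) = circleMap c R '' Set.Icc 0 (0 + 2 * π) := by
    rw [(periodic_circleMap c R).image_Icc Real.two_pi_pos 0, range_circleMap,
      abs_of_nonneg hR]
  have h4 := (lipschitzWith_circleMap c R).hausdorffMeasure_image_le zero_le_one
      (Set.Icc 0 (0 + 2 * π))
  rw [h2, h3]
  refine h4.trans ?_
  have h5 : (μH[1] : Measure ℝ) (Set.Icc 0 (0 + 2 * π)) = ENNReal.ofReal (2 * π) := by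
    rw [MeasureTheory.hausdorffMeasure_real, Real.volume_Icc]
    norm_num
  have h6 : ENNReal.ofReal R = ((Real.nnabs R : ℝ≥0) : ℝ≥0∞) := by
    have h7 : Real.nnabs R = Real.toNNReal R := by
      ext
      simp [Real.coe_nnabs, abs_of_nonneg hR, Real.coe_toNNReal R hR]
    rw [h7]
    rfl
  rw [h5, ENNReal.rpow_one, mul_comm (2*π) R, ENNReal.ofReal_mul hR, h6]

lemma holder_one {α : Type*} [MeasurableSpace α] (ν : Measure α) [IsFiniteMeasure ν]
    {p : ℝ} (hp : 1 < p) {f : α → ℝ} (hm : AEStronglyMeasurable f ν)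
    (hfp : Integrable (fun a => |f a| ^ p) ν) :
    |∫ a, f a ∂ν| ≤ (∫ a, |f a| ^ p ∂ν) ^ (1 / p) * ((ν Set.univ).toReal) ^ ((p - 1) / p) := by
  have hp0 : (0:ℝ) < p := lt_trans one_pos hp
  have hpq : p.HolderConjugate (p / (p - 1)) := .conjExponent hp
  have hfmem : MemLp f (ENNReal.ofReal p) ν := by
    rw [← memLp_norm_rpow_iff (p := ENNReal.ofReal p) (q := ENNReal.ofReal p) hm
        (by simp [hp0, hp0.not_ge]) ENNReal.ofReal_ne_top,
      ENNReal.div_self (by simp [hp0, hp0.not_ge]) ENNReal.ofReal_ne_top,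
      memLp_one_iff_integrable]
    have : (fun x : α => ‖f x‖ ^ (ENNReal.ofReal p).toReal) = fun a => |f a| ^ p := by
      funext a
      rw [ENNReal.toReal_ofReal hp0.le, Real.norm_eq_abs]
    rw [this]
    exact hfp
  have habs : MemLp (fun a => |f a|) (ENNReal.ofReal p) ν := by
    simpa [← Real.norm_eq_abs] using hfmem.norm
  have hc : MemLp (fun _ : α => (1:ℝ)) (ENNReal.ofReal (p / (p - 1))) ν := memLp_const 1
  have h := integral_mul_le_Lp_mul_Lq_of_nonneg hpq
    (Filter.Eventually.of_forall (fun a => abs_nonneg (f a)))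
    (Filter.Eventually.of_forall (fun _ => zero_le_one)) habs hc
  simp only [mul_one] at h
  have h1 : ∫ _a, (1:ℝ) ^ (p / (p - 1)) ∂ν = (ν Set.univ).toReal := by
    simp [Real.one_rpow, Measure.real]
  rw [h1] at h
  have h2 : 1 / (p / (p - 1)) = (p - 1) / p := by
    rw [one_div_div]
  rw [h2] at h
  calc |∫ a, f a ∂ν| ≤ ∫ a, |f a| ∂ν := by
        simpa [Real.norm_eq_abs] using norm_integral_le_integral_norm (μ := ν) f
    _ ≤ _ := h

/-- For `p > 1` there is `C = C(p) > 0` such that: for `0 < ε ≤ 1`, a Borel vector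
field `V`, and balls `B_{r_i}(x_i)` with `0 < r_i ≤ ε` (with `p`-integrable normal
component on each boundary circle), the number of *bad* balls — those whose flux
`∫_{∂B_i} ⟨V, n⟩ dH¹` lies in `2πℤ∖{0}` — is at most
`C ε^{p−1} ∑_i ∫_{∂B_i} |⟨V, n⟩|^p dH¹`; consequently, if this last sum is at most
`K ε⁻¹ ∫‖V‖^p`, the number of bad balls is at most `C K ε^{p−2} ∫‖V‖^p`. -/
theorem bad_balls_count (p : ℝ) (hp : 1 < p) :
    ∃ C : ℝ, 0 < C ∧
      ∀ (ε : ℝ), 0 < ε → ε ≤ 1 →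
      ∀ (V : EuclideanSpace ℝ (Fin 2) → EuclideanSpace ℝ (Fin 2)), Measurable V →
      ∀ (N : ℕ) (x : Fin N → EuclideanSpace ℝ (Fin 2)) (r : Fin N → ℝ),
        (∀ i, 0 < r i) → (∀ i, r i ≤ ε) →
        (∀ i, IntegrableOn (fun y => |⟪V y, (r i)⁻¹ • (y - x i)⟫| ^ p)
          (sphere (x i) (r i)) μH[1]) →
        ((({i : Fin N | ∃ k : ℤ, k ≠ 0 ∧
              (∫ y in sphere (x i) (r i), ⟪V y, (r i)⁻¹ • (y - x i)⟫ ∂μH[1])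
                = 2 * π * (k : ℝ)} : Set (Fin N)).ncard : ℝ)
            ≤ C * ε ^ (p - 1) *
              ∑ i : Fin N, ∫ y in sphere (x i) (r i),
                |⟪V y, (r i)⁻¹ • (y - x i)⟫| ^ p ∂μH[1]) ∧
        (∀ K : ℝ, 0 < K →
          (∑ i : Fin N, ∫ y in sphere (x i) (r i),
              |⟪V y, (r i)⁻¹ • (y - x i)⟫| ^ p ∂μH[1])
            ≤ K * ε⁻¹ * ∫ z, ‖V z‖ ^ p →
          ((({i : Fin N | ∃ k : ℤ, k ≠ 0 ∧
                (∫ y in sphere (x i) (r i), ⟪V y, (r i)⁻¹ • (y - x i)⟫ ∂μH[1])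
                  = 2 * π * (k : ℝ)} : Set (Fin N)).ncard : ℝ)
              ≤ C * K * ε ^ (p - 2) * ∫ z, ‖V z‖ ^ p)) := by
  have hp0 : (0:ℝ) < p := lt_trans one_pos hp
  have h2pi : (0:ℝ) < 2 * π := by positivity
  refine ⟨((2 * π) ^ p)⁻¹ * (2 * π) ^ (p - 1), by positivity, ?_⟩
  intro ε hε hε1 V hV N x r hr hrε hint
  set C : ℝ := ((2 * π) ^ p)⁻¹ * (2 * π) ^ (p - 1) with hC
  have hCpos : 0 < C := by rw [hC]; positivity
  set S : Set (Fin N) := {i : Fin N | ∃ k : ℤ, k ≠ 0 ∧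
      (∫ y in sphere (x i) (r i), ⟪V y, (r i)⁻¹ • (y - x i)⟫ ∂μH[1])
        = 2 * π * (k : ℝ)} with hS
  set A : Fin N → ℝ := fun i => ∫ y in sphere (x i) (r i),
      |⟪V y, (r i)⁻¹ • (y - x i)⟫| ^ p ∂μH[1] with hA
  set T : ℝ := ∑ i : Fin N, A i with hT
  have hApos : ∀ i, 0 ≤ A i := fun i =>
    integral_nonneg (fun y => Real.rpow_nonneg (abs_nonneg _) p)
  set c : ℝ := (2 * π) ^ p * (2 * π * ε) ^ (1 - p) with hc
  -- key: each bad ball contributes at least c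
  have key : ∀ i ∈ S, c ≤ A i := by
    intro i hi
    obtain ⟨k, hk0, hk⟩ := hi
    set ν : Measure (EuclideanSpace ℝ (Fin 2)) := μH[1].restrict (sphere (x i) (r i)) with hν
    have hsph : ν Set.univ ≤ ENNReal.ofReal (2 * π * ε) := by
      rw [hν, Measure.restrict_apply_univ]
      refine (sphere_hausdorff_le (x i) (hr i).le).trans ?_
      exact ENNReal.ofReal_le_ofReal (by nlinarith [hrε i, pi_pos])
    haveI : IsFiniteMeasure ν :=
      ⟨lt_of_le_of_lt hsph ENNReal.ofReal_lt_top⟩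
    set f : EuclideanSpace ℝ (Fin 2) → ℝ := fun y => ⟪V y, (r i)⁻¹ • (y - x i)⟫ with hf
    have hfm : AEStronglyMeasurable f ν := by
      apply Measurable.aestronglyMeasurable
      exact Measurable.inner hV (((measurable_id.sub measurable_const)).const_smul ((r i)⁻¹))
    have hfp : Integrable (fun a => |f a| ^ p) ν := hint i
    have hH := holder_one ν hp hfm hfp
    have hm : (ν Set.univ).toReal ≤ 2 * π * ε :=
      ENNReal.toReal_le_of_le_ofReal (by positivity) hsph
    have hflux : 2 * π ≤ |∫ a, f a ∂ν| := by
      rw [hk, abs_mul]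
      have h1k : (1:ℝ) ≤ |(k : ℝ)| := by
        rw [← Int.cast_abs]
        exact_mod_cast Int.one_le_abs hk0
      nlinarith [abs_of_pos h2pi]
    have step1 : 2 * π ≤ (A i) ^ (1 / p) * (2 * π * ε) ^ ((p - 1) / p) := by
      refine hflux.trans (hH.trans ?_)
      apply mul_le_mul_of_nonneg_left
      · exact Real.rpow_le_rpow ENNReal.toReal_nonneg hm (div_nonneg (by linarith) hp0.le)
      · exact Real.rpow_nonneg (hApos i) _
    -- raise to the p-th power
    have step2 : (2 * π) ^ p ≤ A i * (2 * π * ε) ^ (p - 1) := by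
      have h := Real.rpow_le_rpow h2pi.le step1 hp0.le
      refine h.trans_eq ?_
      rw [Real.mul_rpow (Real.rpow_nonneg (hApos i) _) (Real.rpow_nonneg (by positivity) _),
        ← Real.rpow_mul (hApos i), ← Real.rpow_mul (by positivity : (0:ℝ) ≤ 2 * π * ε),
        one_div_mul_cancel hp0.ne', div_mul_cancel₀ _ hp0.ne', Real.rpow_one]
    have h := mul_le_mul_of_nonneg_right step2
      (Real.rpow_nonneg (by positivity : (0:ℝ) ≤ 2 * π * ε) (1 - p))
    calc c = (2 * π) ^ p * (2 * π * ε) ^ (1 - p) := rfl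
      _ ≤ A i * (2 * π * ε) ^ (p - 1) * (2 * π * ε) ^ (1 - p) := h
      _ = A i := by
          rw [mul_assoc, ← Real.rpow_add (by positivity : (0:ℝ) < 2 * π * ε),
            show p - 1 + (1 - p) = 0 by ring, Real.rpow_zero, mul_one]
  -- counting
  have hcount : (S.ncard : ℝ) * c ≤ T := by
    have hSfin : S.Finite := Set.toFinite S
    rw [Set.ncard_eq_toFinset_card S hSfin]
    calc (hSfin.toFinset.card : ℝ) * c = ∑ _i ∈ hSfin.toFinset, c := by
          rw [Finset.sum_const, nsmul_eq_mul]
      _ ≤ ∑ i ∈ hSfin.toFinset, A i :=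
          Finset.sum_le_sum (fun i hi => key i (hSfin.mem_toFinset.mp hi))
      _ ≤ T :=
          Finset.sum_le_sum_of_subset_of_nonneg (Finset.subset_univ _)
            (fun i _ _ => hApos i)
  have hid : C * ε ^ (p - 1) * c = 1 := by
    have g1 : ((2*π) ^ (-p) * (2*π) ^ (p-1)) * ((2*π) ^ p * (2*π) ^ (1-p)) = 1 := by
      rw [← Real.rpow_add h2pi, ← Real.rpow_add h2pi, ← Real.rpow_add h2pi,
        show -p + (p-1) + (p + (1-p)) = 0 by ring, Real.rpow_zero]
    have g2 : ε ^ (p-1) * ε ^ (1-p) = 1 := by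
      rw [← Real.rpow_add hε, show p - 1 + (1-p) = 0 by ring, Real.rpow_zero]
    calc C * ε ^ (p - 1) * c
        = (((2*π) ^ (-p) * (2*π) ^ (p-1)) * ((2*π) ^ p * (2*π) ^ (1-p)))
            * (ε ^ (p-1) * ε ^ (1-p)) := by
          rw [hC, hc, Real.mul_rpow h2pi.le hε.le, Real.rpow_neg h2pi.le]
          ring
      _ = 1 := by rw [g1, g2, mul_one]
  have hCe : 0 ≤ C * ε ^ (p - 1) :=
    mul_nonneg hCpos.le (Real.rpow_nonneg hε.le _)
  have hmain : (S.ncard : ℝ) ≤ C * ε ^ (p - 1) * T := by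
    have h1 : (S.ncard : ℝ) = C * ε ^ (p - 1) * ((S.ncard : ℝ) * c) := by
      rw [show C * ε ^ (p-1) * ((S.ncard : ℝ) * c) = (C * ε ^ (p-1) * c) * S.ncard by ring,
        hid, one_mul]
    rw [h1]
    exact mul_le_mul_of_nonneg_left hcount hCe
  refine ⟨hmain, ?_⟩
  intro K hK hKT
  calc (S.ncard : ℝ) ≤ C * ε ^ (p - 1) * T := hmain
    _ ≤ C * ε ^ (p - 1) * (K * ε⁻¹ * ∫ z, ‖V z‖ ^ p) :=
        mul_le_mul_of_nonneg_left hKT hCe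
    _ = C * K * ε ^ (p - 2) * ∫ z, ‖V z‖ ^ p := by
        rw [show ε⁻¹ = ε ^ (-1 : ℝ) from (Real.rpow_neg_one ε).symm,
          show C * ε ^ (p-1) * (K * ε ^ (-1:ℝ) * ∫ z, ‖V z‖ ^ p)
            = C * K * (ε ^ (p-1) * ε ^ (-1:ℝ)) * ∫ z, ‖V z‖ ^ p by ring,
          ← Real.rpow_add hε, show p - 1 + (-1 : ℝ) = p - 2 by ring]
end
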